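/- arXiv:math/0509281 — 2 statements merged into one kernel-verified Lean document; each statement's English description precedes it below -/
import Mathlib

section
/- Lebesgue's identity: for $|q|<1$ and any complex $x$, $\sum_{k=0}^\infty \frac{(x;q)_k \, q^{\binom{k+1}{2}}}{(q;q)_k} = (xq;q^2)_\infty \, (-q;q)_\infty$. Equivalently, letting $f(x)$ denote the left-hand side, $f(x) = (1-xq) f(xq^2)$ and $f(0)=(-q;q)_\infty$. -/
open Finset Filter

lemma evd (n : ℕ) : 2 ∣ (n + 1) * n := by
  rw [Nat.mul_comm]; exact (Nat.even_mul_succ_self n).two_dvd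

lemma tri1 (k : ℕ) : k * (k + 1) / 2 = k * (k - 1) / 2 + k := by
  rcases k with _ | n
  · rfl
  · simp only [Nat.add_sub_cancel]
    have h : (n+1) * (n+1+1) = (n+1) * n + 2 * (n+1) := by ring
    have he := evd n
    omega

lemma tri1' (k : ℕ) : (k + 1) * k / 2 = k * (k - 1) / 2 + k := by
  rw [Nat.mul_comm]; exact tri1 k

lemma tri2 (j m : ℕ) :
    (j + m) * (j + m + 1) / 2 = j * (j + 1) / 2 + j * m + m * (m + 1) / 2 := by
  have h : (j + m) * (j + m + 1) = j * (j+1) + 2 * (j*m) + m * (m+1) := by ring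
  have e1 : 2 ∣ j * (j + 1) := (Nat.even_mul_succ_self j).two_dvd
  have e2 : 2 ∣ m * (m + 1) := (Nat.even_mul_succ_self m).two_dvd
  have e3 : 2 ∣ (j + m) * (j + m + 1) := (Nat.even_mul_succ_self (j+m)).two_dvd
  omega

lemma tri3 (j : ℕ) : j * (j - 1) / 2 + j * (j + 1) / 2 = j * j := by
  rcases j with _ | n
  · rfl
  · simp only [Nat.add_sub_cancel]
    have h : (n+1) * n + (n+1) * (n+1+1) = 2 * ((n+1) * (n+1)) := by ring
    have e1 := evd n
    have e2 : 2 ∣ (n+1) * (n+1+1) := (Nat.even_mul_succ_self (n+1)).two_dvd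
    omega

lemma tri4 (j : ℕ) : 2 * (j * (j - 1) / 2) = j * (j - 1) := by
  rcases j with _ | n
  · rfl
  · simp only [Nat.add_sub_cancel]
    have := evd n
    omega

lemma tri6 (j : ℕ) : j + j * (j - 1) = j * j := by
  rcases j with _ | n
  · rfl
  · simp only [Nat.add_sub_cancel]
    have h : (n+1) * (n+1) = (n+1) + (n+1) * n := by ring
    omega

lemma tri7 (j m : ℕ) : j * (j - 1) / 2 + (j + m) * (j + m + 1) / 2
    = (j * (j + 1) / 2 + m * (m + 1) / 2) + (j * (j - 1) / 2 + j * m) := by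
  rw [tri2]; omega

lemma tri8 (j m : ℕ) : j * (j - 1) / 2 + (j + m) * (j + m + 1) / 2
    = j * j + ((j + 1) * m + m * (m - 1) / 2) := by
  rw [tri2]
  have h1 := tri1 m
  have h3 := tri3 j
  have h4 : (j + 1) * m = j * m + m := by ring
  omega

open Finset Filter

noncomputable def qPoch (a q : ℂ) (n : ℕ) : ℂ := ∏ j ∈ Finset.range n, (1 - a * q ^ j)

noncomputable def qPochInf (a q : ℂ) : ℂ := ∏' j : ℕ, (1 - a * q ^ j)

lemma qPoch_zero (a q : ℂ) : qPoch a q 0 = 1 := by simp [qPoch]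

lemma qPoch_succ (a q : ℂ) (n : ℕ) :
    qPoch a q (n + 1) = qPoch a q n * (1 - a * q ^ n) := Finset.prod_range_succ _ _

section basics
variable {q z : ℂ}

lemma one_sub_ne_zero_of_norm_lt {w : ℂ} (h : ‖w‖ < 1) : (1 : ℂ) - w ≠ 0 := by
  intro h0
  have : w = 1 := by linear_combination -h0
  simp [this] at h

lemma norm_mul_pow_le (hq : ‖q‖ < 1) (i : ℕ) : ‖q * q ^ i‖ ≤ ‖q‖ := by
  rw [norm_mul, norm_pow]
  calc ‖q‖ * ‖q‖ ^ i ≤ ‖q‖ * 1 := by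
        refine mul_le_mul_of_nonneg_left ?_ (norm_nonneg q)
        exact pow_le_one₀ (norm_nonneg q) hq.le
    _ = ‖q‖ := mul_one _

lemma qPoch_q_ne_zero (hq : ‖q‖ < 1) (n : ℕ) : qPoch q q n ≠ 0 := by
  refine Finset.prod_ne_zero_iff.2 fun i _ => one_sub_ne_zero_of_norm_lt ?_
  exact lt_of_le_of_lt (norm_mul_pow_le hq i) hq

lemma qPoch_negq_ne_zero (hq : ‖q‖ < 1) (n : ℕ) : qPoch (-q) q n ≠ 0 := by
  refine Finset.prod_ne_zero_iff.2 fun i _ => ?_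
  have : ‖-q * q ^ i‖ < 1 := by
    rw [neg_mul, norm_neg]; exact lt_of_le_of_lt (norm_mul_pow_le hq i) hq
  exact one_sub_ne_zero_of_norm_lt this

lemma norm_one_sub_ge {w : ℂ} (h : ‖w‖ ≤ 1) : 1 - ‖w‖ ≤ ‖1 - w‖ := by
  have := norm_sub_norm_le (1 : ℂ) w
  simpa using this

lemma norm_qPoch_q_ge (hq : ‖q‖ < 1) (n : ℕ) : (1 - ‖q‖) ^ n ≤ ‖qPoch q q n‖ := by
  rw [qPoch, norm_prod]
  have h1 : (0:ℝ) ≤ 1 - ‖q‖ := by linarith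
  calc (1 - ‖q‖) ^ n = ∏ _j ∈ Finset.range n, (1 - ‖q‖) := by
        rw [Finset.prod_const, Finset.card_range]
    _ ≤ ∏ j ∈ Finset.range n, ‖1 - q * q ^ j‖ := by
        refine Finset.prod_le_prod (fun i _ => h1) fun i _ => ?_
        calc 1 - ‖q‖ ≤ 1 - ‖q * q ^ i‖ := by
              have := norm_mul_pow_le hq i; linarith
          _ ≤ ‖1 - q * q ^ i‖ := norm_one_sub_ge (le_trans (norm_mul_pow_le hq i) hq.le)

end basics

section summable_aux

lemma summable_aux1 {C r : ℝ} (hC : 0 ≤ C) (hr0 : 0 ≤ r) (hr : r < 1) :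
    Summable (fun j : ℕ => C ^ j * r ^ (j * (j - 1) / 2)) := by
  apply summable_of_ratio_norm_eventually_le (r := 1 / 2) (by norm_num)
  have h : Tendsto (fun j : ℕ => C * r ^ j) atTop (nhds 0) := by
    simpa using (tendsto_pow_atTop_nhds_zero_of_lt_one hr0 hr).const_mul C
  filter_upwards [h.eventually_le_const (by norm_num : (0:ℝ) < 1/2)] with j hj
  have hrec : (j + 1) * j / 2 = j * (j - 1) / 2 + j := tri1' j
  have hkey : C ^ (j+1) * r ^ ((j+1) * ((j+1) - 1) / 2)
      = (C * r ^ j) * (C ^ j * r ^ (j * (j - 1) / 2)) := by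
    simp only [Nat.add_sub_cancel, hrec, pow_add, pow_succ]
    ring
  rw [Real.norm_eq_abs, Real.norm_eq_abs, abs_of_nonneg (by positivity),
    abs_of_nonneg (by positivity), hkey]
  exact mul_le_mul_of_nonneg_right hj (by positivity)

lemma summable_aux2 {C r : ℝ} (hC : 0 ≤ C) (hr0 : 0 ≤ r) (hr : r < 1) :
    Summable (fun j : ℕ => C ^ j * r ^ (j * (j + 1) / 2)) := by
  refine Summable.of_nonneg_of_le (fun j => by positivity) (fun j => ?_)
    (summable_aux1 hC hr0 hr)
  refine mul_le_mul_of_nonneg_left ?_ (by positivity)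
  refine pow_le_pow_of_le_one hr0 hr.le ?_
  rw [tri1]; omega

end summable_aux

section euler
variable {q : ℂ}

noncomputable def eulerTerm (q z : ℂ) (j : ℕ) : ℂ :=
  z ^ j * q ^ (j * (j - 1) / 2) / qPoch q q j

lemma eulerTerm_zero (q z : ℂ) : eulerTerm q z 0 = 1 := by
  simp [eulerTerm, qPoch]

lemma norm_eulerTerm_le (hq : ‖q‖ < 1) (z : ℂ) (j : ℕ) :
    ‖eulerTerm q z j‖ ≤ (‖z‖ / (1 - ‖q‖)) ^ j * ‖q‖ ^ (j * (j - 1) / 2) := by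
  have h1 : (0:ℝ) < 1 - ‖q‖ := by linarith
  rw [eulerTerm, norm_div, norm_mul, norm_pow, norm_pow]
  calc ‖z‖ ^ j * ‖q‖ ^ (j * (j - 1) / 2) / ‖qPoch q q j‖
      ≤ ‖z‖ ^ j * ‖q‖ ^ (j * (j - 1) / 2) / (1 - ‖q‖) ^ j := by
        gcongr
        exact norm_qPoch_q_ge hq j
    _ = (‖z‖ / (1 - ‖q‖)) ^ j * ‖q‖ ^ (j * (j - 1) / 2) := by
        rw [div_pow]; ring

lemma summable_euler (hq : ‖q‖ < 1) (z : ℂ) : Summable (eulerTerm q z) := by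
  have h1 : (0:ℝ) < 1 - ‖q‖ := by linarith
  refine Summable.of_norm_bounded (summable_aux1 (C := ‖z‖/(1-‖q‖)) (by positivity)
    (norm_nonneg q) hq) (norm_eulerTerm_le hq z)



lemma eulerTerm_rec (hq : ‖q‖ < 1) (z : ℂ) (k : ℕ) :
    eulerTerm q z (k + 1) = eulerTerm q (z * q) (k + 1) + z * eulerTerm q (z * q) k := by
  have hP : qPoch q q k ≠ 0 := qPoch_q_ne_zero hq k
  have hf : (1 : ℂ) - q * q ^ k ≠ 0 :=
    one_sub_ne_zero_of_norm_lt (lt_of_le_of_lt (norm_mul_pow_le hq k) hq)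
  simp only [eulerTerm, qPoch_succ, Nat.add_sub_cancel, tri1' k, pow_add, mul_pow]
  field_simp
  linear_combination (z * z ^ k * q ^ k * q ^ (k * (k - 1) / 2)) * mul_inv_cancel₀ hf

lemma euler_rec (hq : ‖q‖ < 1) (z : ℂ) :
    ∑' j, eulerTerm q z j = (1 + z) * ∑' j, eulerTerm q (z * q) j := by
  have h1 := summable_euler hq z
  have h2 := summable_euler hq (z * q)
  have h2s : Summable (fun k => eulerTerm q (z * q) (k + 1)) :=
    (summable_nat_add_iff 1).2 h2
  have h2m : Summable (fun k => z * eulerTerm q (z * q) k) := h2.mul_left z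
  rw [Summable.tsum_eq_zero_add h1, Summable.tsum_eq_zero_add h2, eulerTerm_zero, eulerTerm_zero]
  have key : ∑' k, eulerTerm q z (k + 1)
      = ∑' k, (eulerTerm q (z * q) (k + 1) + z * eulerTerm q (z * q) k) :=
    tsum_congr fun k => eulerTerm_rec hq z k
  rw [key, Summable.tsum_add h2s h2m, tsum_mul_left]
  rw [Summable.tsum_eq_zero_add h2, eulerTerm_zero]
  ring

lemma euler_iter (hq : ‖q‖ < 1) (z : ℂ) (n : ℕ) :
    ∑' j, eulerTerm q z j = qPoch (-z) q n * ∑' j, eulerTerm q (z * q ^ n) j := by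
  induction n with
  | zero => simp [qPoch_zero]
  | succ n ih =>
    rw [ih, euler_rec hq (z * q ^ n), qPoch_succ]
    rw [show z * q ^ n * q = z * q ^ (n + 1) by rw [pow_succ]; ring]
    ring

lemma euler_tail (hq : ‖q‖ < 1) (z : ℂ) :
    Filter.Tendsto (fun n => ∑' j, eulerTerm q (z * q ^ n) j) Filter.atTop (nhds 1) := by
  have h1 : (0:ℝ) < 1 - ‖q‖ := by linarith
  set g : ℕ → ℝ := fun k => ‖z‖ ^ k * ‖q‖ ^ (k * (k + 1) / 2) / (1 - ‖q‖) ^ (k + 1) with hg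
  have hgs : Summable g := by
    have := (summable_aux2 (C := ‖z‖ / (1 - ‖q‖)) (by positivity) (norm_nonneg q) hq).mul_left
      (1 / (1 - ‖q‖))
    refine this.congr fun k => ?_
    rw [hg]
    rw [div_pow]
    field_simp
    ring
  set M := ∑' k, g k with hM
  have hM0 : 0 ≤ M := tsum_nonneg fun k => by positivity
  have hbound : ∀ n : ℕ, ‖(∑' j, eulerTerm q (z * q ^ n) j) - 1‖ ≤ ‖z‖ * ‖q‖ ^ n * M := by
    intro n
    set w := z * q ^ n with hw
    have hsum := summable_euler hq w
    have hshift : Summable fun k => eulerTerm q w (k + 1) := (summable_nat_add_iff 1).2 hsum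
    have heq : (∑' j, eulerTerm q w j) - 1 = ∑' k, eulerTerm q w (k + 1) := by
      rw [Summable.tsum_eq_zero_add hsum, eulerTerm_zero]; ring
    rw [heq]
    have hterm : ∀ k, ‖eulerTerm q w (k + 1)‖ ≤ ‖z‖ * ‖q‖ ^ n * g k := by
      intro k
      calc ‖eulerTerm q w (k + 1)‖
          ≤ (‖w‖ / (1 - ‖q‖)) ^ (k+1) * ‖q‖ ^ ((k+1) * ((k+1) - 1) / 2) :=
            norm_eulerTerm_le hq w (k + 1)
        _ ≤ ‖z‖ * ‖q‖ ^ n * g k := by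
            simp only [Nat.add_sub_cancel]
            rw [hw, hg]
            rw [norm_mul, norm_pow, show (k+1) * k / 2 = k * (k+1) / 2 from by rw [Nat.mul_comm]]
            rw [div_pow]
            rw [pow_succ (‖z‖ * ‖q‖ ^ n) k]
            have hle : (‖z‖ * ‖q‖ ^ n) ^ k ≤ ‖z‖ ^ k := by
              rw [mul_pow]
              calc ‖z‖ ^ k * (‖q‖ ^ n) ^ k ≤ ‖z‖ ^ k * 1 := by
                    refine mul_le_mul_of_nonneg_left ?_ (by positivity)
                    exact pow_le_one₀ (by positivity) (pow_le_one₀ (norm_nonneg q) hq.le)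
                _ = ‖z‖ ^ k := mul_one _
            calc (‖z‖ * ‖q‖ ^ n) ^ k * (‖z‖ * ‖q‖ ^ n) / (1 - ‖q‖) ^ (k + 1)
                  * ‖q‖ ^ (k * (k + 1) / 2)
                ≤ ‖z‖ ^ k * (‖z‖ * ‖q‖ ^ n) / (1 - ‖q‖) ^ (k + 1) * ‖q‖ ^ (k * (k + 1) / 2) := by
                  gcongr
              _ = ‖z‖ * ‖q‖ ^ n * (‖z‖ ^ k * ‖q‖ ^ (k * (k + 1) / 2) / (1 - ‖q‖) ^ (k + 1)) := by
                  ring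
    have hgs2 : Summable fun k => ‖z‖ * ‖q‖ ^ n * g k := hgs.mul_left _
    calc ‖∑' k, eulerTerm q w (k + 1)‖ ≤ ∑' k, ‖eulerTerm q w (k + 1)‖ :=
          norm_tsum_le_tsum_norm (hshift.norm)
      _ ≤ ∑' k, ‖z‖ * ‖q‖ ^ n * g k := Summable.tsum_le_tsum hterm hshift.norm hgs2
      _ = ‖z‖ * ‖q‖ ^ n * M := by rw [tsum_mul_left]
  have hzero : Filter.Tendsto (fun n => (∑' j, eulerTerm q (z * q ^ n) j) - 1)
      Filter.atTop (nhds 0) := by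
    apply squeeze_zero_norm hbound
    have : Filter.Tendsto (fun n : ℕ => ‖q‖ ^ n) Filter.atTop (nhds 0) :=
      tendsto_pow_atTop_nhds_zero_of_lt_one (norm_nonneg q) hq
    have h2 : Filter.Tendsto (fun n : ℕ => ‖z‖ * ‖q‖ ^ n * M) Filter.atTop (nhds (‖z‖ * 0 * M)) := by
      exact (this.const_mul ‖z‖).mul_const M
    simpa using h2
  have := hzero.add (tendsto_const_nhds (x := (1:ℂ)))
  simpa using this

lemma multipliable_one_add (hq : ‖q‖ < 1) (z : ℂ) :
    Multipliable (fun i : ℕ => 1 + z * q ^ i) := by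
  by_cases hex : ∃ i : ℕ, (1 : ℂ) + z * q ^ i = 0
  · obtain ⟨i0, hi0⟩ := hex
    refine ⟨0, ?_⟩
    rw [HasProd]
    refine Filter.Tendsto.congr' ?_ tendsto_const_nhds
    rw [Filter.EventuallyEq, SummationFilter.unconditional_filter, Filter.eventually_atTop]
    exact ⟨{i0}, fun s hs => (Finset.prod_eq_zero (hs (Finset.mem_singleton_self i0)) hi0).symm⟩
  · push_neg at hex
    refine Complex.multipliable_of_summable_log ?_
    have htend : Filter.Tendsto (fun n : ℕ => ‖z‖ * ‖q‖ ^ n) Filter.atTop (nhds 0) := by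
      simpa using (tendsto_pow_atTop_nhds_zero_of_lt_one (norm_nonneg q) hq).const_mul ‖z‖
    refine Summable.of_norm_bounded_eventually_nat (g := fun n => 3/2 * (‖z‖ * ‖q‖ ^ n)) ?_ ?_
    · exact ((summable_geometric_of_lt_one (norm_nonneg q) hq).mul_left ‖z‖).mul_left _
    · filter_upwards [htend.eventually_le_const (by norm_num : (0:ℝ) < 1/2)] with n hn
      have hz : ‖z * q ^ n‖ ≤ 1/2 := by rw [norm_mul, norm_pow]; exact hn
      simpa [norm_mul, norm_pow] using Complex.norm_log_one_add_half_le_self hz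

lemma euler (hq : ‖q‖ < 1) (z : ℂ) :
    ∑' j, eulerTerm q z j = ∏' i : ℕ, (1 + z * q ^ i) := by
  have hm := multipliable_one_add hq z
  have h1 := hm.hasProd.tendsto_prod_nat
  have h3 := h1.mul (euler_tail hq z)
  have h4 : (fun n : ℕ => (∏ i ∈ Finset.range n, (1 + z * q ^ i))
      * ∑' j, eulerTerm q (z * q ^ n) j) = fun _ => ∑' j, eulerTerm q z j := by
    funext n
    rw [show (∏ i ∈ Finset.range n, (1 + z * q ^ i)) = qPoch (-z) q n from
      Finset.prod_congr rfl fun i _ => by rw [neg_mul]; ring]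
    exact (euler_iter hq z n).symm
  rw [h4] at h3
  simpa using (tendsto_nhds_unique tendsto_const_nhds h3)

lemma euler' (hq : ‖q‖ < 1) (z : ℂ) :
    ∑' j, eulerTerm q z j = qPochInf (-z) q := by
  rw [euler hq z, qPochInf]
  exact tprod_congr fun i => by ring

end euler

section qbinom
variable {q : ℂ}

noncomputable def qBin (q : ℂ) (k j : ℕ) : ℂ :=
  qPoch q q k / (qPoch q q j * qPoch q q (k - j))

lemma qBin_zero (hq : ‖q‖ < 1) (k : ℕ) : qBin q k 0 = 1 := by
  simp [qBin, qPoch_zero, div_self (qPoch_q_ne_zero hq k)]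

lemma qBin_self (hq : ‖q‖ < 1) (k : ℕ) : qBin q k k = 1 := by
  simp [qBin, qPoch_zero, div_self (qPoch_q_ne_zero hq k)]

lemma qBin_pascal (hq : ‖q‖ < 1) (i m : ℕ) :
    qBin q (i + m + 2) (i + 1) = qBin q (i + m + 1) (i + 1) + q ^ (m + 1) * qBin q (i + m + 1) i := by
  have h1 : i + m + 2 - (i + 1) = m + 1 := by omega
  have h2 : i + m + 1 - (i + 1) = m := by omega
  have h3 : i + m + 1 - i = m + 1 := by omega
  rw [qBin, qBin, qBin, h1, h2, h3]
  rw [show i + m + 2 = (i + m + 1) + 1 from rfl, qPoch_succ q q (i + m + 1), qPoch_succ q q i,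
    qPoch_succ q q m]
  have nP1 : qPoch q q i ≠ 0 := qPoch_q_ne_zero hq i
  have nP2 : qPoch q q m ≠ 0 := qPoch_q_ne_zero hq m
  have nP3 : qPoch q q (i + m + 1) ≠ 0 := qPoch_q_ne_zero hq (i + m + 1)
  have nf1 : (1:ℂ) - q * q ^ i ≠ 0 :=
    one_sub_ne_zero_of_norm_lt (lt_of_le_of_lt (norm_mul_pow_le hq i) hq)
  have nf2 : (1:ℂ) - q * q ^ m ≠ 0 :=
    one_sub_ne_zero_of_norm_lt (lt_of_le_of_lt (norm_mul_pow_le hq m) hq)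
  field_simp
  ring

lemma qBin_pascal' (hq : ‖q‖ < 1) {i k : ℕ} (h : i < k) :
    qBin q (k + 1) (i + 1) = qBin q k (i + 1) + q ^ (k - i) * qBin q k i := by
  obtain ⟨m, rfl⟩ : ∃ m, k = i + m + 1 := ⟨k - i - 1, by omega⟩
  have h4 : i + m + 1 + 1 = i + m + 2 := by omega
  have h5 : i + m + 1 - i = m + 1 := by omega
  rw [h4, h5]
  exact qBin_pascal hq i m

lemma qbinom_expand (hq : ‖q‖ < 1) (k : ℕ) : ∀ x : ℂ,
    qPoch x q k = ∑ j ∈ Finset.range (k + 1),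
      qBin q k j * ((-x) ^ j * q ^ (j * (j - 1) / 2)) := by
  induction k with
  | zero =>
    intro x
    simp [qPoch_zero, qBin_self hq 0]
  | succ k ih =>
    intro x
    have hstep : qPoch x q (k + 1)
        = (∑ j ∈ Finset.range (k + 1), qBin q k j * ((-x) ^ j * q ^ (j * (j - 1) / 2)))
          + ∑ j ∈ Finset.range (k + 1),
            q ^ (k - j) * qBin q k j * ((-x) ^ (j + 1) * q ^ ((j + 1) * ((j + 1) - 1) / 2)) := by
      rw [qPoch_succ, ih x, Finset.sum_mul, ← Finset.sum_add_distrib]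
      refine Finset.sum_congr rfl fun j hj => ?_
      have hjk : j ≤ k := by
        have := Finset.mem_range.1 hj; omega
      have hkj : k - j + j = k := by omega
      have he : (j + 1) * ((j + 1) - 1) / 2 = j * (j - 1) / 2 + j := by
        simp only [Nat.add_sub_cancel]; exact tri1' j
      rw [he, pow_add]
      have hq1 : q ^ (k - j) * q ^ j = q ^ k := by rw [← pow_add, hkj]
      calc qBin q k j * ((-x) ^ j * q ^ (j * (j - 1) / 2)) * (1 - x * q ^ k)
          = qBin q k j * ((-x) ^ j * q ^ (j * (j - 1) / 2))
            + (q ^ (k - j) * q ^ j) * qBin q k j * ((-x) ^ (j + 1) * q ^ (j * (j - 1) / 2)) := by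
            rw [hq1]; ring
        _ = _ := by ring
    rw [hstep]
    rw [Finset.sum_range_succ' (fun j => qBin q (k + 1) j * ((-x) ^ j * q ^ (j * (j - 1) / 2))) (k + 1)]
    rw [Finset.sum_range_succ (fun i => qBin q (k + 1) (i + 1) *
      ((-x) ^ (i + 1) * q ^ ((i + 1) * ((i + 1) - 1) / 2))) k]
    rw [Finset.sum_range_succ' (fun j => qBin q k j * ((-x) ^ j * q ^ (j * (j - 1) / 2))) k]
    rw [Finset.sum_range_succ (fun j => q ^ (k - j) * qBin q k j *
      ((-x) ^ (j + 1) * q ^ ((j + 1) * ((j + 1) - 1) / 2))) k]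
    have hmid : ∑ i ∈ Finset.range k, qBin q (k + 1) (i + 1) *
        ((-x) ^ (i + 1) * q ^ ((i + 1) * ((i + 1) - 1) / 2))
        = ∑ i ∈ Finset.range k, (qBin q k (i + 1) * ((-x) ^ (i + 1) * q ^ ((i + 1) * ((i + 1) - 1) / 2))
          + q ^ (k - i) * qBin q k i * ((-x) ^ (i + 1) * q ^ ((i + 1) * ((i + 1) - 1) / 2))) := by
      refine Finset.sum_congr rfl fun i hi => ?_
      rw [qBin_pascal' hq (Finset.mem_range.1 hi)]
      ring
    rw [hmid, Finset.sum_add_distrib]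
    rw [qBin_zero hq k, qBin_zero hq (k + 1), qBin_self hq k, qBin_self hq (k + 1)]
    have : k - k = 0 := by omega
    rw [this, pow_zero]
    ring

end qbinom

section main
variable {q : ℂ}

noncomputable def Fterm (q x : ℂ) (p : ℕ × ℕ) : ℂ :=
  (-x) ^ p.1 * q ^ (p.1 * (p.1 - 1) / 2 + (p.1 + p.2) * (p.1 + p.2 + 1) / 2)
    / (qPoch q q p.1 * qPoch q q p.2)

lemma summable_F (hq : ‖q‖ < 1) (x : ℂ) : Summable (Fterm q x) := by
  have h1 : (0:ℝ) < 1 - ‖q‖ := by linarith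
  have hs1 : Summable (fun j : ℕ => (‖x‖ / (1 - ‖q‖)) ^ j * ‖q‖ ^ (j * (j + 1) / 2)) :=
    summable_aux2 (by positivity) (norm_nonneg q) hq
  have hs2 : Summable (fun m : ℕ => (1 / (1 - ‖q‖)) ^ m * ‖q‖ ^ (m * (m + 1) / 2)) :=
    summable_aux2 (by positivity) (norm_nonneg q) hq
  have hs := hs1.mul_of_nonneg hs2 (fun j => by positivity) (fun m => by positivity)
  refine Summable.of_norm_bounded hs ?_
  rintro ⟨j, m⟩
  have hE := tri7 j m
  have hPj := norm_qPoch_q_ge hq j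
  have hPm := norm_qPoch_q_ge hq m
  simp only [Fterm]
  rw [norm_div, norm_mul, norm_mul, norm_pow, norm_pow, norm_neg]
  calc ‖x‖ ^ j * ‖q‖ ^ (j * (j - 1) / 2 + (j + m) * (j + m + 1) / 2)
        / (‖qPoch q q j‖ * ‖qPoch q q m‖)
      ≤ ‖x‖ ^ j * (‖q‖ ^ (j * (j + 1) / 2) * ‖q‖ ^ (m * (m + 1) / 2))
        / ((1 - ‖q‖) ^ j * (1 - ‖q‖) ^ m) := by
        have hnum : ‖q‖ ^ (j * (j - 1) / 2 + (j + m) * (j + m + 1) / 2)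
            ≤ ‖q‖ ^ (j * (j + 1) / 2) * ‖q‖ ^ (m * (m + 1) / 2) := by
          rw [hE, pow_add, pow_add]
          calc ‖q‖ ^ (j * (j + 1) / 2) * ‖q‖ ^ (m * (m + 1) / 2)
                * ‖q‖ ^ (j * (j - 1) / 2 + j * m)
              ≤ ‖q‖ ^ (j * (j + 1) / 2) * ‖q‖ ^ (m * (m + 1) / 2) * 1 := by
                refine mul_le_mul_of_nonneg_left ?_ (by positivity)
                exact pow_le_one₀ (norm_nonneg q) hq.le
            _ = _ := mul_one _
        refine div_le_div₀ (by positivity) (mul_le_mul_of_nonneg_left hnum (by positivity))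
          (by positivity) (mul_le_mul hPj hPm (pow_nonneg h1.le m) (norm_nonneg _))
    _ = (‖x‖ / (1 - ‖q‖)) ^ j * ‖q‖ ^ (j * (j + 1) / 2)
        * ((1 / (1 - ‖q‖)) ^ m * ‖q‖ ^ (m * (m + 1) / 2)) := by
        rw [div_pow, div_pow]
        field_simp
        ring

lemma term_eq_sum_F (hq : ‖q‖ < 1) (x : ℂ) (k : ℕ) :
    qPoch x q k * q ^ (k * (k + 1) / 2) / qPoch q q k
      = ∑ j ∈ Finset.range (k + 1), Fterm q x (j, k - j) := by
  rw [qbinom_expand hq k x, Finset.sum_mul, Finset.sum_div]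
  refine Finset.sum_congr rfl fun j hj => ?_
  have hjk : j ≤ k := by have := Finset.mem_range.1 hj; omega
  have hsub : j + (k - j) = k := by omega
  simp only [Fterm, hsub]
  have nPk : qPoch q q k ≠ 0 := qPoch_q_ne_zero hq k
  have nPj : qPoch q q j ≠ 0 := qPoch_q_ne_zero hq j
  have nPkj : qPoch q q (k - j) ≠ 0 := qPoch_q_ne_zero hq (k - j)
  rw [qBin, pow_add]
  field_simp

lemma tsum_term_eq_tsum_F (hq : ‖q‖ < 1) (x : ℂ) :
    ∑' k : ℕ, qPoch x q k * q ^ (k * (k + 1) / 2) / qPoch q q k = ∑' p : ℕ × ℕ, Fterm q x p := by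
  have hsF := summable_F hq x
  have hsF' : Summable (fun σ : Σ n : ℕ, Finset.HasAntidiagonal.antidiagonal n => Fterm q x σ.2) :=
    Finset.HasAntidiagonal.sigmaAntidiagonalEquivProd.summable_iff.2 hsF
  calc ∑' k : ℕ, qPoch x q k * q ^ (k * (k + 1) / 2) / qPoch q q k
      = ∑' k : ℕ, ∑ j ∈ Finset.range (k + 1), Fterm q x (j, k - j) :=
        tsum_congr (term_eq_sum_F hq x)
    _ = ∑' k : ℕ, ∑ p ∈ Finset.HasAntidiagonal.antidiagonal k, Fterm q x p := by
        refine tsum_congr fun k => ?_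
        rw [Finset.Nat.sum_antidiagonal_eq_sum_range_succ_mk]
    _ = ∑' k : ℕ, ∑' p : Finset.HasAntidiagonal.antidiagonal k, Fterm q x p := by
        refine tsum_congr fun k => ?_
        rw [Finset.tsum_subtype]
    _ = ∑' σ : Σ n : ℕ, Finset.HasAntidiagonal.antidiagonal n, Fterm q x σ.2 :=
        (Summable.tsum_sigma' (fun k => (hasSum_fintype _).summable) hsF').symm
    _ = ∑' p : ℕ × ℕ, Fterm q x p := Finset.HasAntidiagonal.sigmaAntidiagonalEquivProd.tsum_eq _

lemma Fterm_eq (hq : ‖q‖ < 1) (x : ℂ) (j m : ℕ) :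
    Fterm q x (j, m) = ((-x) ^ j * q ^ (j * j) / qPoch q q j) * eulerTerm q (q * q ^ j) m := by
  simp only [Fterm, eulerTerm]
  rw [tri8 j m, pow_add, pow_add, mul_pow]
  rw [show (q ^ j) ^ m = q ^ (j * m) from by rw [← pow_mul]]
  have h1 : q ^ m * q ^ (j * m) = q ^ ((j + 1) * m) := by
    rw [← pow_add]
    congr 1
    ring
  rw [← h1]
  ring

lemma inner_sum_eq (hq : ‖q‖ < 1) (x : ℂ) (j : ℕ) :
    ∑' m : ℕ, Fterm q x (j, m)
      = ((-x) ^ j * q ^ (j * j) / qPoch q q j) * qPochInf (-(q * q ^ j)) q := by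
  calc ∑' m : ℕ, Fterm q x (j, m)
      = ∑' m : ℕ, ((-x) ^ j * q ^ (j * j) / qPoch q q j) * eulerTerm q (q * q ^ j) m :=
        tsum_congr fun m => Fterm_eq hq x j m
    _ = ((-x) ^ j * q ^ (j * j) / qPoch q q j) * ∑' m, eulerTerm q (q * q ^ j) m := tsum_mul_left
    _ = _ := by rw [euler' hq (q * q ^ j)]

lemma tail_split (hq : ‖q‖ < 1) (j : ℕ) :
    qPochInf (-q) q = qPoch (-q) q j * qPochInf (-(q * q ^ j)) q := by
  have hm : Multipliable (fun n : ℕ => 1 - (-q) * q ^ (n + j)) := by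
    refine (multipliable_one_add hq (q * q ^ j)).congr fun n => ?_
    rw [pow_add]
    ring
  have h := Multipliable.prod_mul_tprod_nat_mul' (f := fun i : ℕ => 1 - (-q) * q ^ i) (k := j) hm
  rw [qPochInf, ← h, qPoch]
  congr 1
  rw [qPochInf]
  refine tprod_congr fun n => ?_
  show (1 : ℂ) - -q * q ^ (n + j) = 1 - -(q * q ^ j) * q ^ n
  rw [pow_add]
  ring

lemma main_sum (hq : ‖q‖ < 1) (x : ℂ) :
    ∑' k : ℕ, qPoch x q k * q ^ (k * (k + 1) / 2) / qPoch q q k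
      = qPochInf (x * q) (q ^ 2) * qPochInf (-q) q := by
  have hq2 : ‖q ^ 2‖ < 1 := by
    rw [norm_pow]
    exact pow_lt_one₀ (norm_nonneg q) hq two_ne_zero
  have hsF := summable_F hq x
  calc ∑' k : ℕ, qPoch x q k * q ^ (k * (k + 1) / 2) / qPoch q q k
      = ∑' p : ℕ × ℕ, Fterm q x p := tsum_term_eq_tsum_F hq x
    _ = ∑' j : ℕ, ∑' m : ℕ, Fterm q x (j, m) := Summable.tsum_prod' hsF fun j => hsF.prod_factor j
    _ = ∑' j : ℕ, ((-x) ^ j * q ^ (j * j) / qPoch q q j) * qPochInf (-(q * q ^ j)) q :=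
        tsum_congr fun j => inner_sum_eq hq x j
    _ = ∑' j : ℕ, qPochInf (-q) q * ((-x) ^ j * q ^ (j * j) / qPoch (q ^ 2) (q ^ 2) j) := by
        refine tsum_congr fun j => ?_
        have hnegj : qPoch (-q) q j ≠ 0 := qPoch_negq_ne_zero hq j
        have hsplit : qPochInf (-(q * q ^ j)) q = qPochInf (-q) q / qPoch (-q) q j := by
          rw [eq_div_iff hnegj, mul_comm, ← tail_split hq j]
        rw [hsplit]
        have hmul : qPoch q q j * qPoch (-q) q j = qPoch (q ^ 2) (q ^ 2) j := by
          rw [qPoch, qPoch, qPoch, ← Finset.prod_mul_distrib]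
          refine Finset.prod_congr rfl fun i _ => ?_
          rw [show ((q:ℂ) ^ 2) ^ i = (q ^ i) ^ 2 from pow_right_comm q 2 i]
          ring
        have hPj : qPoch q q j ≠ 0 := qPoch_q_ne_zero hq j
        rw [← hmul]
        field_simp
    _ = qPochInf (-q) q * ∑' j : ℕ, ((-x) ^ j * q ^ (j * j) / qPoch (q ^ 2) (q ^ 2) j) :=
        tsum_mul_left
    _ = qPochInf (-q) q * ∑' j : ℕ, eulerTerm (q ^ 2) (-(x * q)) j := by
        congr 1
        refine tsum_congr fun j => ?_
        rw [eulerTerm]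
        congr 1
        rw [show (-(x * q)) ^ j = (-x) ^ j * q ^ j from by rw [← neg_mul, mul_pow]]
        rw [show ((q:ℂ) ^ 2) ^ (j * (j - 1) / 2) = q ^ (2 * (j * (j - 1) / 2)) from by
          rw [pow_mul]]
        rw [tri4 j, mul_assoc, ← pow_add, tri6 j]
    _ = qPochInf (-q) q * qPochInf (x * q) (q ^ 2) := by
        rw [euler' hq2 (-(x * q)), neg_neg]
    _ = qPochInf (x * q) (q ^ 2) * qPochInf (-q) q := mul_comm _ _

end main

theorem lebesgue_identity (q : ℂ) (hq : ‖q‖ < 1) :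
    (∀ x : ℂ, ∑' k : ℕ, qPoch x q k * q ^ (k * (k + 1) / 2) / qPoch q q k
        = qPochInf (x * q) (q ^ 2) * qPochInf (-q) q) ∧
    (∀ x : ℂ, ∑' k : ℕ, qPoch x q k * q ^ (k * (k + 1) / 2) / qPoch q q k
        = (1 - x * q) * ∑' k : ℕ, qPoch (x * q ^ 2) q k * q ^ (k * (k + 1) / 2) / qPoch q q k) ∧
    (∑' k : ℕ, qPoch (0 : ℂ) q k * q ^ (k * (k + 1) / 2) / qPoch q q k = qPochInf (-q) q) := by
  have hqn : ‖q‖ < 1 := hq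
  have hq2 : ‖q ^ 2‖ < 1 := by
    rw [norm_pow]
    exact pow_lt_one₀ (norm_nonneg q) hqn two_ne_zero
  refine ⟨main_sum hqn, fun x => ?_, ?_⟩
  · rw [main_sum hqn x, main_sum hqn (x * q ^ 2)]
    have hkey : qPochInf (x * q) (q ^ 2) = (1 - x * q) * qPochInf (x * q ^ 2 * q) (q ^ 2) := by
      have hm : Multipliable (fun n : ℕ => 1 - x * q * (q ^ 2) ^ (n + 1)) := by
        refine (multipliable_one_add hq2 (-(x * q * q ^ 2))).congr fun n => ?_
        rw [pow_succ']
        ring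
      have h := tprod_eq_zero_mul' (f := fun i : ℕ => 1 - x * q * (q ^ 2) ^ i) hm
      rw [qPochInf, h]
      congr 1
      · simp
      · rw [qPochInf]
        refine tprod_congr fun n => ?_
        show (1 : ℂ) - x * q * (q ^ 2) ^ (n + 1) = 1 - x * q ^ 2 * q * (q ^ 2) ^ n
        rw [pow_succ']
        ring
    rw [hkey]
    ring
  · have h0 : ∀ k : ℕ, qPoch (0 : ℂ) q k * q ^ (k * (k + 1) / 2) / qPoch q q k
        = eulerTerm q q k := by
      intro k
      rw [show qPoch (0 : ℂ) q k = 1 from by simp [qPoch], eulerTerm, tri1 k, pow_add]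
      ring
    rw [tsum_congr h0, euler' hqn q]
end

section
/- Semi-finite Jacobi triple product recurrence: for $0<|q|<1$, $z \neq 0$, and integer $m \ge 0$, let $f(m) = \sum_{k=-\infty}^\infty \frac{q^{\binom{k}{2}} z^k}{(q^{m+1};q)_k}$. Then $f(m+1) = (1 + q^{m+1}/z)(1 - q^{m+1}) f(m)$. -/
noncomputable def qPochInt (a q : ℂ) (k : ℤ) : ℂ := qPochInf a q / qPochInf (a * q ^ k) q

open Filter

lemma tprod_eq_zero' {f : ℕ → ℂ} (j : ℕ) (h : f j = 0) : ∏' i, f i = 0 := by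
  have hp : HasProd f 0 := by
    have hev : (fun s : Finset ℕ => ∏ i ∈ s, f i) =ᶠ[atTop] (fun _ => 0) := by
      filter_upwards [Filter.eventually_ge_atTop ({j} : Finset ℕ)] with s hs
      exact Finset.prod_eq_zero (hs (Finset.mem_singleton_self j)) h
    exact (tendsto_congr' hev).mpr tendsto_const_nhds
  exact hp.tprod_eq

lemma summable_log_one_sub (a q : ℂ) (hq : ‖q‖ < 1) :
    Summable (fun j : ℕ => Complex.log (1 - a * q ^ j)) := by
  have hten : Tendsto (fun j : ℕ => ‖a‖ * ‖q‖ ^ j) atTop (nhds 0) := by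
    simpa using (tendsto_pow_atTop_nhds_zero_of_lt_one (norm_nonneg q) hq).const_mul
      (‖a‖)
  have hev : ∀ᶠ j in atTop, ‖Complex.log (1 - a * q ^ j)‖
      ≤ (3/2) * (‖a‖ * ‖q‖ ^ j) := by
    filter_upwards [hten.eventually_le_const (by norm_num : (0:ℝ) < 1/2)] with j hj
    have h1 : ‖-(a * q ^ j)‖ ≤ 1/2 := by
      simpa [norm_mul, norm_pow] using hj
    have := Complex.norm_log_one_add_half_le_self h1
    simpa [norm_mul, norm_pow, sub_eq_add_neg] using this
  have hgeo : Summable (fun j : ℕ => (3/2 : ℝ) * (‖a‖ * ‖q‖ ^ j)) :=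
    (((summable_geometric_of_lt_one (norm_nonneg q) hq)).mul_left _).mul_left _
  exact Summable.of_norm_bounded_eventually_nat hgeo hev

lemma qPochInf_split (a q : ℂ) (hq : ‖q‖ < 1) :
    qPochInf a q = (1 - a) * qPochInf (a * q) q := by
  have hfun : (fun j : ℕ => 1 - (a * q) * q ^ j) = (fun j : ℕ => 1 - a * q ^ (j + 1)) := by
    funext j
    rw [pow_succ]
    ring
  by_cases hz : ∀ j : ℕ, 1 - a * q ^ j ≠ 0
  · have hmul : Multipliable (fun j : ℕ => 1 - a * q ^ (j + 1)) := by
      rw [← hfun]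
      have hp := (summable_log_one_sub (a * q) q hq).hasSum.cexp
      refine (HasProd.congr_fun hp (fun j => (Complex.exp_log ?_).symm)).multipliable
      rw [congrFun hfun j]
      exact hz (j + 1)
    calc qPochInf a q = (1 - a * q ^ 0) * ∏' j : ℕ, (1 - a * q ^ (j + 1)) :=
          tprod_eq_zero_mul' hmul
      _ = (1 - a) * qPochInf (a * q) q := by rw [pow_zero, mul_one, qPochInf, hfun]
  · push_neg at hz
    obtain ⟨j, hj⟩ := hz
    rcases j with _ | j
    · have h0 : (1:ℂ) - a = 0 := by
        rw [pow_zero, mul_one] at hj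
        exact hj
      rw [h0, zero_mul, qPochInf]
      exact tprod_eq_zero' 0 (by rw [pow_zero, mul_one]; exact h0)
    · rw [qPochInf, qPochInf, tprod_eq_zero' (j+1) hj,
        tprod_eq_zero' j (by rw [show 1 - a * q * q ^ j = 1 - a * q ^ (j+1) from congrFun hfun j]; exact hj),
        mul_zero]

lemma qPochInf_eq_poch_mul (a q : ℂ) (hq : ‖q‖ < 1) (n : ℕ) :
    qPochInf a q = qPoch a q n * qPochInf (a * q ^ n) q := by
  induction n with
  | zero => simp [qPoch]
  | succ n ih =>
    rw [ih, qPochInf_split (a * q ^ n) q hq,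
      show a * q ^ n * q = a * q ^ (n + 1) from by rw [pow_succ, mul_assoc]]
    simp only [qPoch, Finset.prod_range_succ]
    ring

lemma half_int_succ (k : ℤ) : k * (k - 1) / 2 = (k - 1) * (k - 1 - 1) / 2 + (k - 1) := by
  obtain ⟨c, hc⟩ := Int.even_mul_succ_self (k - 1)
  obtain ⟨d, hd⟩ := Int.even_mul_succ_self (k - 1 - 1)
  have h1 : k * (k - 1) = 2 * c := by linear_combination hc
  have h2 : (k - 1) * (k - 1 - 1) = 2 * d := by linear_combination hd
  rw [h1, h2, Int.mul_ediv_cancel_left _ two_ne_zero, Int.mul_ediv_cancel_left _ two_ne_zero]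
  have h3 : (2:ℤ) * c = 2 * (d + (k - 1)) := by linear_combination h2 - h1
  exact mul_left_cancel₀ two_ne_zero h3

theorem semi_finite_jacobi (q z : ℂ) (hq0 : q ≠ 0) (hq : ‖q‖ < 1) (hz : z ≠ 0)
    (f : ℕ → ℂ)
    (hf : ∀ m : ℕ, f m = ∑' k : ℤ, q ^ (k * (k - 1) / 2) * z ^ k / qPochInt (q ^ (m + 1)) q k)
    (m : ℕ) :
    f (m + 1) = (1 + q ^ (m + 1) / z) * (1 - q ^ (m + 1)) * f m := by
  have hNsplit : ∀ t : ℤ, qPochInf (q ^ t) q = (1 - q ^ t) * qPochInf (q ^ (t + 1)) q := by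
    intro t
    rw [qPochInf_split (q ^ t) q hq, ← zpow_add_one₀ hq0]
  have hNzero : ∀ t : ℤ, t ≤ 0 → qPochInf (q ^ t) q = 0 := by
    intro t ht
    rw [qPochInf]
    refine tprod_eq_zero' (-t).toNat ?_
    rw [show q ^ t * q ^ ((-t).toNat) = 1 from ?_, sub_self]
    rw [← zpow_natCast q (-t).toNat, ← zpow_add₀ hq0, show t + ((-t).toNat : ℤ) = 0 by omega,
      zpow_zero]
  have habs : ∀ t : ℤ, 1 ≤ t → ‖q ^ t‖ ≤ ‖q‖ := by
    intro t ht
    obtain ⟨n, rfl⟩ : ∃ n : ℕ, t = 1 + n := ⟨(t - 1).toNat, by omega⟩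
    rw [zpow_add₀ hq0, zpow_one, zpow_natCast, norm_mul, norm_pow]
    calc ‖q‖ * ‖q‖ ^ n ≤ ‖q‖ * 1 :=
          mul_le_mul_of_nonneg_left (pow_le_one₀ (norm_nonneg q) hq.le)
            (norm_nonneg q)
      _ = ‖q‖ := mul_one _
  have hne : ∀ t : ℤ, 1 ≤ t → (1 : ℂ) - q ^ t ≠ 0 := by
    intro t ht h
    rw [sub_eq_zero] at h
    have h2 := habs t ht
    rw [← h] at h2
    simp only [norm_one] at h2
    linarith
  have hPInt : ∀ (a : ℕ) (k : ℤ), qPochInt (q ^ a) q k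
      = qPochInf (q ^ (a : ℤ)) q / qPochInf (q ^ ((a : ℤ) + k)) q := by
    intro a k
    rw [qPochInt, ← zpow_natCast q a, ← zpow_add₀ hq0]
  set M : ℤ := (m : ℤ) + 1 with hM
  have hM1 : 1 ≤ M := by omega
  have hcast1 : ((m + 1 : ℕ) : ℤ) = M := by omega
  have hcast2 : ((m + 1 + 1 : ℕ) : ℤ) = M + 1 := by omega
  have hcne : (1 : ℂ) - q ^ M ≠ 0 := hne M hM1
  have hqM : (q : ℂ) ^ (m + 1) = q ^ M := by rw [← zpow_natCast q (m + 1), hcast1]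
  have hfm : f m = ∑' k : ℤ, q ^ (k * (k - 1) / 2) * z ^ k
      / (qPochInf (q ^ M) q / qPochInf (q ^ (M + k)) q) := by
    rw [hf m]
    refine tsum_congr fun k => ?_
    rw [hPInt (m + 1) k, hcast1]
  have hfm1 : f (m + 1) = ∑' k : ℤ, q ^ (k * (k - 1) / 2) * z ^ k
      / (qPochInf (q ^ (M + 1)) q / qPochInf (q ^ (M + 1 + k)) q) := by
    rw [hf (m + 1)]
    refine tsum_congr fun k => ?_
    rw [hPInt (m + 1 + 1) k, hcast2]
  rw [hqM]
  by_cases hA : qPochInf (q ^ M) q = 0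
  · have hA1 : qPochInf (q ^ (M + 1)) q = 0 := by
      have h := hNsplit M
      rw [hA] at h
      rcases mul_eq_zero.mp h.symm with h' | h'
      · exact absurd h' hcne
      · exact h'
    have h0 : f m = 0 := by
      rw [hfm, hA]
      simp only [zero_div, div_zero]
      exact tsum_zero
    have h1 : f (m + 1) = 0 := by
      rw [hfm1, hA1]
      simp only [zero_div, div_zero]
      exact tsum_zero
    rw [h0, h1, mul_zero]
  · set g : ℤ → ℂ := fun k => q ^ (k * (k - 1) / 2) * z ^ k
        / (qPochInf (q ^ M) q / qPochInf (q ^ (M + k)) q) with hg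
    have hfmg : f m = ∑' k : ℤ, g k := hfm
    -- finite q-Pochhammer facts
    have hsplitn : ∀ n : ℕ, qPochInf (q ^ M) q
        = qPoch (q ^ M) q n * qPochInf (q ^ (M + (n : ℤ))) q := by
      intro n
      rw [qPochInf_eq_poch_mul (q ^ M) q hq n, ← zpow_natCast q n, ← zpow_add₀ hq0]
    have hNn : ∀ n : ℕ, qPochInf (q ^ (M + (n : ℤ))) q ≠ 0 := by
      intro n h
      exact hA (by rw [hsplitn n, h, mul_zero])
    have hDn : ∀ n : ℕ, qPoch (q ^ M) q n ≠ 0 := by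
      intro n
      rw [qPoch]
      refine Finset.prod_ne_zero_iff.mpr fun j _ => ?_
      rw [show q ^ M * q ^ j = q ^ (M + (j : ℤ)) from by
        rw [← zpow_natCast q j, ← zpow_add₀ hq0]]
      exact hne (M + j) (by omega)
    have hPn : ∀ n : ℕ, qPochInf (q ^ M) q / qPochInf (q ^ (M + (n : ℤ))) q
        = qPoch (q ^ M) q n := by
      intro n
      rw [hsplitn n, mul_div_assoc, div_self (hNn n), mul_one]
    have hgn : ∀ n : ℕ, g (n : ℤ) = q ^ ((n : ℤ) * ((n : ℤ) - 1) / 2) * z ^ (n : ℤ)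
        / qPoch (q ^ M) q n := by
      intro n
      rw [hg]
      simp only []
      rw [hPn n]
    -- summability
    have hSg : Summable g := by
      apply Summable.of_nat_of_neg_add_one
      · apply summable_of_ratio_norm_eventually_le (r := 1/2) (by norm_num)
        have hten : Tendsto (fun n : ℕ => ‖z‖ * ‖q‖ ^ n) atTop (nhds 0) := by
          simpa using (tendsto_pow_atTop_nhds_zero_of_lt_one (norm_nonneg q) hq).const_mul
            (‖z‖)
        have hq1 : 0 < (1 - ‖q‖) / 2 := by linarith
        filter_upwards [hten.eventually_le_const hq1] with n hn
        have hcastn : ((n + 1 : ℕ) : ℤ) = (n : ℤ) + 1 := by push_cast; ring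
        have he : ((n : ℤ) + 1) * (((n : ℤ) + 1) - 1) / 2 = (n : ℤ) * ((n : ℤ) - 1) / 2 + n := by
          have h := half_int_succ ((n : ℤ) + 1)
          simpa using h
        have hw : q ^ (((n + 1 : ℕ) : ℤ) * (((n + 1 : ℕ) : ℤ) - 1) / 2) * z ^ ((n + 1 : ℕ) : ℤ)
            = (q ^ ((n : ℤ) * ((n : ℤ) - 1) / 2) * z ^ (n : ℤ)) * (q ^ (n : ℤ) * z) := by
          rw [hcastn, he, zpow_add₀ hq0, zpow_add_one₀ hz]
          ring
        rw [hgn (n + 1), hgn n, hw]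
        rw [show qPoch (q ^ M) q (n + 1) = qPoch (q ^ M) q n * (1 - q ^ M * q ^ n) from by
          simp only [qPoch, Finset.prod_range_succ]]
        have hMn : q ^ M * q ^ n = q ^ (M + (n : ℤ)) := by
          rw [← zpow_natCast q n, ← zpow_add₀ hq0]
        rw [hMn, norm_div, norm_div,
          norm_mul (q ^ ((n : ℤ) * ((n : ℤ) - 1) / 2) * z ^ (n : ℤ)) (q ^ (n : ℤ) * z),
          norm_mul (qPoch (q ^ M) q n) ((1 : ℂ) - q ^ (M + (n : ℤ)))]
        have hd : 1 - ‖q‖ ≤ ‖(1 : ℂ) - q ^ (M + (n : ℤ))‖ := by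
          have h1 := habs (M + n) (by omega)
          calc 1 - ‖q‖ ≤ 1 - ‖q ^ (M + (n : ℤ))‖ := by linarith
            _ = ‖(1 : ℂ)‖ - ‖q ^ (M + (n : ℤ))‖ := by
                rw [norm_one]
            _ ≤ ‖(1 : ℂ) - q ^ (M + (n : ℤ))‖ := norm_sub_norm_le _ _
        have hd0 : 0 < ‖(1 : ℂ) - q ^ (M + (n : ℤ))‖ := by linarith
        have hb : ‖q ^ (n : ℤ) * z‖ ≤ (1 - ‖q‖) / 2 := by
          rw [norm_mul, zpow_natCast, norm_pow]
          calc ‖q‖ ^ n * ‖z‖ = ‖z‖ * ‖q‖ ^ n := by ring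
            _ ≤ (1 - ‖q‖) / 2 := hn
        have hc0 : 0 < ‖qPoch (q ^ M) q n‖ := norm_pos_iff.mpr (hDn n)
        have hbd : ‖q ^ (n : ℤ) * z‖ / ‖(1 : ℂ) - q ^ (M + (n : ℤ))‖ ≤ 1 / 2 := by
          rw [div_le_iff₀ hd0]
          calc ‖q ^ (n : ℤ) * z‖ ≤ (1 - ‖q‖) / 2 := hb
            _ ≤ 1 / 2 * ‖(1 : ℂ) - q ^ (M + (n : ℤ))‖ := by linarith
        calc ‖q ^ ((n : ℤ) * ((n : ℤ) - 1) / 2) * z ^ (n : ℤ)‖ * ‖q ^ (n : ℤ) * z‖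
              / (‖qPoch (q ^ M) q n‖ * ‖(1 : ℂ) - q ^ (M + (n : ℤ))‖)
            = (‖q ^ ((n : ℤ) * ((n : ℤ) - 1) / 2) * z ^ (n : ℤ)‖ / ‖qPoch (q ^ M) q n‖)
              * (‖q ^ (n : ℤ) * z‖ / ‖(1 : ℂ) - q ^ (M + (n : ℤ))‖) := by ring
          _ ≤ (‖q ^ ((n : ℤ) * ((n : ℤ) - 1) / 2) * z ^ (n : ℤ)‖ / ‖qPoch (q ^ M) q n‖)
              * (1 / 2) := by
                refine mul_le_mul_of_nonneg_left hbd ?_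
                exact div_nonneg (norm_nonneg _) (norm_nonneg _)
          _ = 1 / 2 * (‖q ^ ((n : ℤ) * ((n : ℤ) - 1) / 2) * z ^ (n : ℤ)‖
              / ‖qPoch (q ^ M) q n‖) := by ring
      · apply summable_of_ne_finset_zero (s := Finset.range (m + 1))
        intro n hn
        rw [Finset.mem_range, not_lt] at hn
        have h1 : M + (-((n : ℤ) + 1)) ≤ 0 := by omega
        rw [hg]
        simp only []
        rw [hNzero _ h1, div_zero, div_zero]
    -- termwise identities
    have hT1 : ∀ k : ℤ, q ^ (k * (k - 1) / 2) * z ^ k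
        / (qPochInf (q ^ (M + 1)) q / qPochInf (q ^ (M + 1 + k)) q)
        = (1 - q ^ M) * (q ^ (k * (k - 1) / 2) * z ^ k
        / (qPochInf (q ^ M) q / qPochInf (q ^ (M + (k + 1))) q)) := by
      intro k
      rw [show M + (k + 1) = M + 1 + k from by ring, hNsplit M, div_div_eq_mul_div,
        div_div_eq_mul_div, ← mul_div_assoc, mul_div_mul_left _ _ hcne]
    have hT2 : ∀ k : ℤ, q ^ ((k - 1) * (k - 1 - 1) / 2) * z ^ (k - 1)
        / (qPochInf (q ^ M) q / qPochInf (q ^ (M + k)) q)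
        = q ^ ((k - 1) * (k - 1 - 1) / 2) * z ^ (k - 1)
          / (qPochInf (q ^ M) q / qPochInf (q ^ (M + (k - 1))) q)
        + q ^ M / z * (q ^ (k * (k - 1) / 2) * z ^ k
          / (qPochInf (q ^ M) q / qPochInf (q ^ (M + k)) q)) := by
      intro k
      have hsplit := hNsplit (M + k - 1)
      rw [show M + k - 1 + 1 = M + k from by ring] at hsplit
      rw [show M + (k - 1) = M + k - 1 from by ring, hsplit, div_div_eq_mul_div,
        div_div_eq_mul_div, div_div_eq_mul_div, ← mul_div_assoc, ← add_div]
      congr 1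
      have hnum : q ^ M / z * (q ^ (k * (k - 1) / 2) * z ^ k)
          = q ^ ((k - 1) * (k - 1 - 1) / 2) * z ^ (k - 1) * q ^ (M + k - 1) := by
        rw [half_int_succ k, zpow_add₀ hq0 ((k - 1) * (k - 1 - 1) / 2) (k - 1),
          show M + k - 1 = M + (k - 1) from by ring, zpow_add₀ hq0 M (k - 1),
          show z ^ k = z ^ (k - 1) * z from by rw [← zpow_add_one₀ hz, sub_add_cancel]]
        field_simp
      linear_combination (-qPochInf (q ^ (M + k)) q) * hnum
    -- assembly
    have hshift : ∑' k : ℤ, g (k - 1) = ∑' k : ℤ, g k := by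
      simpa using (Equiv.subRight (1 : ℤ)).tsum_eq g
    have hSg' : Summable (fun k : ℤ => g (k - 1)) := by
      have := (Equiv.subRight (1 : ℤ)).summable_iff (f := g)
      exact this.mpr hSg
    have key : f (m + 1) = (1 - q ^ M) * ((1 + q ^ M / z) * f m) := by
      calc f (m + 1) = ∑' k : ℤ, (1 - q ^ M) * (q ^ (k * (k - 1) / 2) * z ^ k
            / (qPochInf (q ^ M) q / qPochInf (q ^ (M + (k + 1))) q)) := by
            rw [hfm1]
            exact tsum_congr hT1
        _ = (1 - q ^ M) * ∑' k : ℤ, q ^ (k * (k - 1) / 2) * z ^ k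
            / (qPochInf (q ^ M) q / qPochInf (q ^ (M + (k + 1))) q) := tsum_mul_left
        _ = (1 - q ^ M) * ∑' k : ℤ, q ^ ((k - 1) * (k - 1 - 1) / 2) * z ^ (k - 1)
            / (qPochInf (q ^ M) q / qPochInf (q ^ (M + k)) q) := by
            congr 1
            rw [← (Equiv.subRight (1 : ℤ)).tsum_eq (fun k : ℤ => q ^ (k * (k - 1) / 2) * z ^ k
              / (qPochInf (q ^ M) q / qPochInf (q ^ (M + (k + 1))) q))]
            refine tsum_congr fun k => ?_
            show q ^ ((k - 1) * (k - 1 - 1) / 2) * z ^ (k - 1)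
                / (qPochInf (q ^ M) q / qPochInf (q ^ (M + (k - 1 + 1))) q) = _
            rw [show M + (k - 1 + 1) = M + k from by ring]
        _ = (1 - q ^ M) * ∑' k : ℤ, (g (k - 1) + q ^ M / z * g k) := by
            congr 1
            exact tsum_congr hT2
        _ = (1 - q ^ M) * (∑' k : ℤ, g (k - 1) + ∑' k : ℤ, q ^ M / z * g k) := by
            rw [Summable.tsum_add hSg' (hSg.mul_left _)]
        _ = (1 - q ^ M) * ((1 + q ^ M / z) * f m) := by
            rw [hshift, tsum_mul_left, ← hfmg]
            ring
    rw [key]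
    ring
end
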